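/- Let K be the kernel of the homomorphism θ : F_2 × F_2 × F_2 → ℤ² (where each F_2 is free of rank 2 with basis e^(i)_1, e^(i)_2 and ℤ² has basis t_1, t_2) given by θ(e^(i)_j) = t_j for i = 1,2,3 and j = 1,2. Then for every finite presentation P = ⟨A | R⟩ of K, the Dehn function δ_P satisfies n³ ⪯ δ_P; that is, there exists a constant C > 0 such that n³ ≤ C·δ_P(Cn + C) + Cn + C for all n ∈ ℕ. -/

import Mathlib

/-- The element `t_j` of `ℤ^r` (written multiplicatively), where indices `j ≥ r` map to `0`. -/
def tvec (m r : ℕ) (j : Fin m) : Multiplicative (Fin r → ℤ) :=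
  Multiplicative.ofAdd (if h : (j : ℕ) < r then Pi.single (⟨j, h⟩ : Fin r) (1 : ℤ) else 0)

/-- The homomorphism `F_m → ℤ^r` sending `e_j ↦ t_j` for `j ≤ r` and `e_j ↦ 0` for `j > r`. -/
def facHom (m r : ℕ) : FreeGroup (Fin m) →* Multiplicative (Fin r → ℤ) :=
  FreeGroup.lift (tvec m r)

/-- The homomorphism `θ : F_m^(1) × ⋯ × F_m^(n) → ℤ^r` with `θ(e^(i)_j) = t_j` for `j ≤ r`
and `θ(e^(i)_j) = 0` for `j > r`.  For `n = 3`, `m = r = 2` this is the map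
`F_2 × F_2 × F_2 → ℤ²` with `θ(e^(i)_j) = t_j` for all `i, j`. -/
def thetaHom (n m r : ℕ) : (∀ _ : Fin n, FreeGroup (Fin m)) →* Multiplicative (Fin r → ℤ) where
  toFun g := ∏ i, facHom m r (g i)
  map_one' := by simp
  map_mul' a b := by simp [Finset.prod_mul_distrib]

/-- The group `K^n_m(r) = ker θ`; the group `K` of the theorem is `Kgrp 3 2 2`. -/
def Kgrp (n m r : ℕ) : Subgroup (∀ _ : Fin n, FreeGroup (Fin m)) := (thetaHom n m r).ker

/-- `AreaLE R g N` says that, in the free group, `g` is a product of `N` conjugates of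
elements of `R ∪ R⁻¹`. -/
def AreaLE {A : Type} (R : Set (FreeGroup A)) (g : FreeGroup A) (N : ℕ) : Prop :=
  ∃ x r : Fin N → FreeGroup A, (∀ i, r i ∈ R ∪ R⁻¹) ∧
    g = (List.ofFn (fun i => x i * r i * (x i)⁻¹)).prod

/-- The area of a null-homotopic word over the presentation with relator set `R`: the least
`N` such that the word is freely equal to a product of `N` conjugates of relators. -/
noncomputable def area {A : Type} (R : Set (FreeGroup A)) (g : FreeGroup A) : ℕ :=
  sInf {N | AreaLE R g N}

/-- The Dehn function of the presentation given by the marking `μ : F(A) → G` and the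
relator set `R`: the maximal area of a null-homotopic word of length at most `n`. -/
noncomputable def dehn {A : Type} {G : Type*} [Group G] (μ : FreeGroup A →* G)
    (R : Set (FreeGroup A)) (n : ℕ) : ℕ :=
  sSup {a | ∃ w : List (A × Bool), w.length ≤ n ∧ μ (FreeGroup.mk w) = 1 ∧
    a = area R (FreeGroup.mk w)}


-- ======================= auxiliary development =======================

/-- Integer Heisenberg group, used as coordinates on each free-group factor. -/
@[ext] structure Heis where
  e : ℤ
  f : ℤ
  p : ℤ

namespace Heis

instance : Mul Heis := ⟨fun x y => ⟨x.e + y.e, x.f + y.f, x.p + y.p + x.e * y.f⟩⟩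
instance : One Heis := ⟨⟨0, 0, 0⟩⟩
instance : Inv Heis := ⟨fun x => ⟨-x.e, -x.f, -x.p + x.e * x.f⟩⟩

@[simp] lemma mul_e (x y : Heis) : (x * y).e = x.e + y.e := rfl
@[simp] lemma mul_f (x y : Heis) : (x * y).f = x.f + y.f := rfl
@[simp] lemma mul_p (x y : Heis) : (x * y).p = x.p + y.p + x.e * y.f := rfl
@[simp] lemma one_e : (1 : Heis).e = 0 := rfl
@[simp] lemma one_f : (1 : Heis).f = 0 := rfl
@[simp] lemma one_p : (1 : Heis).p = 0 := rfl
@[simp] lemma inv_e (x : Heis) : (x⁻¹).e = -x.e := rfl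
@[simp] lemma inv_f (x : Heis) : (x⁻¹).f = -x.f := rfl
@[simp] lemma inv_p (x : Heis) : (x⁻¹).p = -x.p + x.e * x.f := rfl

instance : Group Heis where
  mul_assoc x y z := by ext <;> simp <;> ring
  one_mul x := by ext <;> simp
  mul_one x := by ext <;> simp
  inv_mul_cancel x := by ext <;> simp <;> ring

end Heis

/-- the coordinate map on each free factor -/
def eta : FreeGroup (Fin 2) →* Heis :=
  FreeGroup.lift (fun j => if j = 0 then ⟨1,0,0⟩ else ⟨0,1,0⟩)

@[simp] lemma eta_a : eta (FreeGroup.of 0) = ⟨1,0,0⟩ := by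
  simp [eta]
@[simp] lemma eta_b : eta (FreeGroup.of 1) = ⟨0,1,0⟩ := by
  simp [eta]

lemma eta_a_pow (n : ℕ) : eta (FreeGroup.of 0 ^ n) = ⟨(n : ℤ),0,0⟩ := by
  induction n with
  | zero => simp; rfl
  | succ k ih =>
    rw [pow_succ, map_mul, ih, eta_a]
    ext <;> simp <;> push_cast <;> ring

lemma eta_b_pow (n : ℕ) : eta (FreeGroup.of 1 ^ n) = ⟨0,(n : ℤ),0⟩ := by
  induction n with
  | zero => simp; rfl
  | succ k ih =>
    rw [pow_succ, map_mul, ih, eta_b]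
    ext <;> simp <;> push_cast <;> ring
-- coordinates
def Ec (g : ∀ _ : Fin 3, FreeGroup (Fin 2)) (i : Fin 3) : ℤ := (eta (g i)).e
def Fc (g : ∀ _ : Fin 3, FreeGroup (Fin 2)) (i : Fin 3) : ℤ := (eta (g i)).f
def Pc (g : ∀ _ : Fin 3, FreeGroup (Fin 2)) (i : Fin 3) : ℤ := (eta (g i)).p

@[simp] lemma Ec_mul (g h : ∀ _ : Fin 3, FreeGroup (Fin 2)) (i : Fin 3) :
    Ec (g * h) i = Ec g i + Ec h i := by simp [Ec, Pi.mul_apply]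
@[simp] lemma Fc_mul (g h : ∀ _ : Fin 3, FreeGroup (Fin 2)) (i : Fin 3) :
    Fc (g * h) i = Fc g i + Fc h i := by simp [Fc, Pi.mul_apply]
@[simp] lemma Pc_mul (g h : ∀ _ : Fin 3, FreeGroup (Fin 2)) (i : Fin 3) :
    Pc (g * h) i = Pc g i + Pc h i + Ec g i * Fc h i := by simp [Pc, Ec, Fc, Pi.mul_apply]
@[simp] lemma Ec_one (i : Fin 3) : Ec 1 i = 0 := by simp [Ec, Pi.one_apply]
@[simp] lemma Fc_one (i : Fin 3) : Fc 1 i = 0 := by simp [Fc, Pi.one_apply]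
@[simp] lemma Pc_one (i : Fin 3) : Pc 1 i = 0 := by simp [Pc, Pi.one_apply]
@[simp] lemma Ec_inv (g : ∀ _ : Fin 3, FreeGroup (Fin 2)) (i : Fin 3) :
    Ec g⁻¹ i = -Ec g i := by simp [Ec, Pi.inv_apply]
@[simp] lemma Fc_inv (g : ∀ _ : Fin 3, FreeGroup (Fin 2)) (i : Fin 3) :
    Fc g⁻¹ i = -Fc g i := by simp [Fc, Pi.inv_apply]
@[simp] lemma Pc_inv (g : ∀ _ : Fin 3, FreeGroup (Fin 2)) (i : Fin 3) :
    Pc g⁻¹ i = -Pc g i + Ec g i * Fc g i := by simp [Pc, Ec, Fc, Pi.inv_apply]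

-- evaluation homs
def evalK (k : Fin 2) : Multiplicative (Fin 2 → ℤ) →* Multiplicative ℤ where
  toFun x := Multiplicative.ofAdd (Multiplicative.toAdd x k)
  map_one' := rfl
  map_mul' _ _ := rfl

def eHom : Heis →* Multiplicative ℤ where
  toFun x := Multiplicative.ofAdd x.e
  map_one' := rfl
  map_mul' _ _ := rfl

def fHom : Heis →* Multiplicative ℤ where
  toFun x := Multiplicative.ofAdd x.f
  map_one' := rfl
  map_mul' _ _ := rfl

lemma evalK_facHom_e : (evalK 0).comp (facHom 2 2) = eHom.comp eta := by
  apply FreeGroup.ext_hom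
  intro j
  fin_cases j <;>
    simp [facHom, tvec, evalK, eHom, Pi.single_apply] <;> rfl

lemma evalK_facHom_f : (evalK 1).comp (facHom 2 2) = fHom.comp eta := by
  apply FreeGroup.ext_hom
  intro j
  fin_cases j <;>
    simp [facHom, tvec, evalK, fHom, Pi.single_apply] <;> rfl

lemma constraint_e {g : ∀ _ : Fin 3, FreeGroup (Fin 2)} (hg : g ∈ Kgrp 3 2 2) :
    Ec g 0 + Ec g 1 + Ec g 2 = 0 := by
  have h1 : thetaHom 3 2 2 g = 1 := hg
  have h2 : (evalK 0) (thetaHom 3 2 2 g) = 1 := by rw [h1]; exact map_one _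
  have h3 : thetaHom 3 2 2 g = ∏ i, facHom 2 2 (g i) := rfl
  rw [h3, map_prod, Fin.prod_univ_three] at h2
  have e0 : ∀ x, (evalK 0) (facHom 2 2 x) = eHom (eta x) := fun x =>
    congrFun (congrArg (fun (f : FreeGroup (Fin 2) →* Multiplicative ℤ) => f.toFun) evalK_facHom_e) x
  rw [e0, e0, e0] at h2
  have : Multiplicative.ofAdd (Ec g 0 + Ec g 1 + Ec g 2) = Multiplicative.ofAdd (0 : ℤ) := by
    rw [ofAdd_add, ofAdd_add]
    exact h2
  exact Multiplicative.ofAdd.injective this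

lemma constraint_f {g : ∀ _ : Fin 3, FreeGroup (Fin 2)} (hg : g ∈ Kgrp 3 2 2) :
    Fc g 0 + Fc g 1 + Fc g 2 = 0 := by
  have h1 : thetaHom 3 2 2 g = 1 := hg
  have h2 : (evalK 1) (thetaHom 3 2 2 g) = 1 := by rw [h1]; exact map_one _
  have h3 : thetaHom 3 2 2 g = ∏ i, facHom 2 2 (g i) := rfl
  rw [h3, map_prod, Fin.prod_univ_three] at h2
  have e0 : ∀ x, (evalK 1) (facHom 2 2 x) = fHom (eta x) := fun x =>
    congrFun (congrArg (fun (f : FreeGroup (Fin 2) →* Multiplicative ℤ) => f.toFun) evalK_facHom_f) x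
  rw [e0, e0, e0] at h2
  have : Multiplicative.ofAdd (Fc g 0 + Fc g 1 + Fc g 2) = Multiplicative.ofAdd (0 : ℤ) := by
    rw [ofAdd_add, ofAdd_add]
    exact h2
  exact Multiplicative.ofAdd.injective this

/-- the polynomial 2-cocycle on `K` -/
def coc (g h : ∀ _ : Fin 3, FreeGroup (Fin 2)) : ℤ :=
  2 * Ec g 1 * Pc h 0 - 2 * Ec g 1 * Ec h 0 * Fc h 0 + Fc g 1 * Ec h 0 * Ec h 0
  + 2 * Pc g 0 * Ec h 0 + 2 * Pc g 1 * Ec h 0 - 2 * Pc g 2 * Ec h 0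
  + 2 * Ec g 0 * Fc g 1 * Ec h 0

@[simp] lemma coc_one_right (g : ∀ _ : Fin 3, FreeGroup (Fin 2)) : coc g 1 = 0 := by
  simp [coc]
@[simp] lemma coc_one_left (g : ∀ _ : Fin 3, FreeGroup (Fin 2)) : coc 1 g = 0 := by
  simp [coc]

lemma coc_cocycle {g h k : ∀ _ : Fin 3, FreeGroup (Fin 2)}
    (hge : Ec g 0 + Ec g 1 + Ec g 2 = 0) (hhf : Fc h 0 + Fc h 1 + Fc h 2 = 0) :
    coc g h + coc (g * h) k = coc h k + coc g (h * k) := by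
  simp only [coc, Ec_mul, Fc_mul, Pc_mul]
  linear_combination (-2 * Ec k 0 * (Fc h 0 + Fc h 1 + Fc h 2) + 2 * Fc h 1 * Ec k 0
      + 2 * Fc h 0 * Ec k 0) * hge + (2 * Ec g 1 * Ec k 0 + 2 * Ec g 0 * Ec k 0) * hhf

/-- the central extension of `K` by `ℤ` along `coc` -/
@[ext] structure Kt where
  g : ↥(Kgrp 3 2 2)
  t : ℤ

namespace Kt

instance : Mul Kt := ⟨fun x y => ⟨x.g * y.g, x.t + y.t + coc x.g.val y.g.val⟩⟩
instance : One Kt := ⟨⟨1, 0⟩⟩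
instance : Inv Kt := ⟨fun x => ⟨x.g⁻¹, -x.t - coc (x.g⁻¹ : ↥(Kgrp 3 2 2)).val x.g.val⟩⟩

@[simp] lemma mul_g (x y : Kt) : (x * y).g = x.g * y.g := rfl
@[simp] lemma mul_t (x y : Kt) : (x * y).t = x.t + y.t + coc x.g.val y.g.val := rfl
@[simp] lemma one_g : (1 : Kt).g = 1 := rfl
@[simp] lemma one_t : (1 : Kt).t = 0 := rfl
@[simp] lemma inv_g (x : Kt) : (x⁻¹).g = x.g⁻¹ := rfl
@[simp] lemma inv_t (x : Kt) : (x⁻¹).t = -x.t - coc (x.g⁻¹ : ↥(Kgrp 3 2 2)).val x.g.val := rfl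

instance : Group Kt where
  mul_assoc x y z := by
    refine Kt.ext (mul_assoc x.g y.g z.g) ?_
    · show x.t + y.t + coc x.g.val y.g.val + z.t + coc ((x.g * y.g) : ↥(Kgrp 3 2 2)).val z.g.val
        = x.t + (y.t + z.t + coc y.g.val z.g.val) + coc x.g.val ((y.g * z.g) : ↥(Kgrp 3 2 2)).val
      have hc := coc_cocycle (g := x.g.val) (h := y.g.val) (k := z.g.val)
        (constraint_e x.g.2) (constraint_f y.g.2)
      push_cast
      linarith [hc]
  one_mul x := by ext <;> simp
  mul_one x := by ext <;> simp
  inv_mul_cancel x := by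
    refine Kt.ext (inv_mul_cancel x.g) ?_
    · simp
      ring

/-- the central copy of ℤ -/
def iota : Multiplicative ℤ →* Kt where
  toFun z := ⟨1, Multiplicative.toAdd z⟩
  map_one' := rfl
  map_mul' x y := by ext <;> simp

@[simp] lemma iota_g (z : Multiplicative ℤ) : (iota z).g = 1 := rfl
@[simp] lemma iota_t (z : Multiplicative ℤ) : (iota z).t = Multiplicative.toAdd z := rfl

lemma iota_comm (x : Kt) (z : Multiplicative ℤ) : x * iota z = iota z * x := by
  ext <;> simp [mul_comm] <;> ring

lemma iota_conj (x : Kt) (z : Multiplicative ℤ) : x * iota z * x⁻¹ = iota z := by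
  rw [iota_comm, mul_assoc, mul_inv_cancel, mul_one]

end Kt

section Lift

variable {A : Type} (μ : FreeGroup A →* ↥(Kgrp 3 2 2))

/-- the lift of `μ` to the central extension -/
def PhiT : FreeGroup A →* Kt :=
  FreeGroup.lift fun a => ⟨μ (FreeGroup.of a), 0⟩

/-- projection to `K` -/
def gPart : Kt →* ↥(Kgrp 3 2 2) where
  toFun x := x.g
  map_one' := rfl
  map_mul' _ _ := rfl

lemma gPart_PhiT (x : FreeGroup A) : (PhiT μ x).g = μ x := by
  have : gPart.comp (PhiT μ) = μ := by
    apply FreeGroup.ext_hom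
    intro a
    simp [PhiT, gPart]
  calc (PhiT μ x).g = (gPart.comp (PhiT μ)) x := rfl
  _ = μ x := by rw [this]

/-- the winding number -/
def Tw (x : FreeGroup A) : ℤ := (PhiT μ x).t

lemma PhiT_of_ker {x : FreeGroup A} (hx : μ x = 1) :
    PhiT μ x = Kt.iota (Multiplicative.ofAdd (Tw μ x)) := by
  ext
  · rw [Kt.iota_g, gPart_PhiT, hx]
  · rfl

lemma Tw_prod_conj {N : ℕ} (x r : Fin N → FreeGroup A)
    (hr : ∀ i, μ (r i) = 1) :
    Tw μ ((List.ofFn fun i => x i * r i * (x i)⁻¹).prod) = ∑ i, Tw μ (r i) := by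
  have h2 : ∀ i : Fin N, PhiT μ (x i * r i * (x i)⁻¹)
      = Kt.iota (Multiplicative.ofAdd (Tw μ (r i))) := by
    intro i
    rw [map_mul, map_mul, map_inv, PhiT_of_ker μ (hr i), Kt.iota_conj]
  have h1 : PhiT μ ((List.ofFn fun i => x i * r i * (x i)⁻¹).prod)
      = (List.ofFn fun i => Kt.iota (Multiplicative.ofAdd (Tw μ (r i)))).prod := by
    rw [map_list_prod (PhiT μ), List.map_ofFn]
    exact congrArg List.prod (congrArg List.ofFn (funext fun i => h2 i))
  have h3 : (List.ofFn fun i => Kt.iota (Multiplicative.ofAdd (Tw μ (r i)))).prod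
      = Kt.iota ((List.ofFn fun i => Multiplicative.ofAdd (Tw μ (r i))).prod) := by
    rw [map_list_prod Kt.iota, List.map_ofFn]
    rfl
  have h4 : ((List.ofFn fun i => Multiplicative.ofAdd (Tw μ (r i))).prod)
      = Multiplicative.ofAdd (∑ i, Tw μ (r i)) := by
    rw [List.prod_ofFn, ← ofAdd_sum]
  show (PhiT μ _).t = _
  rw [h1, h3, h4, Kt.iota_t, toAdd_ofAdd]

end Lift

section Words

/-- generators of the rank-2 free group -/
noncomputable abbrev aa : FreeGroup (Fin 2) := FreeGroup.of 0
noncomputable abbrev bb : FreeGroup (Fin 2) := FreeGroup.of 1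

lemma eta_a_pow' (n : ℕ) : eta (aa⁻¹ ^ n) = ⟨-(n:ℤ),0,0⟩ := by
  rw [inv_pow, map_inv, eta_a_pow]
  ext <;> simp

lemma eta_b_pow' (n : ℕ) : eta (bb⁻¹ ^ n) = ⟨0,-(n:ℤ),0⟩ := by
  rw [inv_pow, map_inv, eta_b_pow]
  ext <;> simp

lemma mem_Kgrp_iff (g : ∀ _ : Fin 3, FreeGroup (Fin 2)) :
    g ∈ Kgrp 3 2 2 ↔ facHom 2 2 (g 0) * facHom 2 2 (g 1) * facHom 2 2 (g 2) = 1 := by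
  show thetaHom 3 2 2 g = 1 ↔ _
  have h3 : thetaHom 3 2 2 g = ∏ i, facHom 2 2 (g i) := rfl
  rw [h3, Fin.prod_univ_three]

/-- `α = (a, a⁻¹, 1)` -/
noncomputable def alK : ↥(Kgrp 3 2 2) :=
  ⟨![aa, aa⁻¹, 1], by rw [mem_Kgrp_iff]; simp⟩

/-- `β = (b, b⁻¹, 1)` -/
noncomputable def beK : ↥(Kgrp 3 2 2) :=
  ⟨![bb, bb⁻¹, 1], by rw [mem_Kgrp_iff]; simp⟩

/-- `α' = (1, a, a⁻¹)` -/
noncomputable def alpK : ↥(Kgrp 3 2 2) :=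
  ⟨![1, aa, aa⁻¹], by rw [mem_Kgrp_iff]; simp⟩

/-- `u = α α' = (a, 1, a⁻¹)` -/
noncomputable def uK : ↥(Kgrp 3 2 2) := alK * alpK

/-- `v n = β⁻ⁿ α'ⁿ βⁿ α'⁻ⁿ = (1, bⁿaⁿb⁻ⁿa⁻ⁿ, 1)` -/
noncomputable def vK (n : ℕ) : ↥(Kgrp 3 2 2) :=
  (beK⁻¹) ^ n * alpK ^ n * beK ^ n * (alpK⁻¹) ^ n

lemma uK_val (n : ℕ) : ∀ i, ((uK ^ n : ↥(Kgrp 3 2 2)) : ∀ _ : Fin 3, FreeGroup (Fin 2)) i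
    = ![aa ^ n, 1, aa⁻¹ ^ n] i := by
  intro i
  have h1 : ((uK ^ n : ↥(Kgrp 3 2 2)) : ∀ _ : Fin 3, FreeGroup (Fin 2)) i
      = ((uK : ∀ _ : Fin 3, FreeGroup (Fin 2)) i) ^ n := by
    rw [SubgroupClass.coe_pow, Pi.pow_apply]
  rw [h1]
  have h2 : (uK : ∀ _ : Fin 3, FreeGroup (Fin 2)) i = ![aa, 1, aa⁻¹] i := by
    show ((alK : ∀ _ : Fin 3, FreeGroup (Fin 2)) * (alpK : ∀ _ : Fin 3, FreeGroup (Fin 2))) i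
      = ![aa, 1, aa⁻¹] i
    rw [Pi.mul_apply]
    fin_cases i <;> simp [alK, alpK]
  rw [h2]
  fin_cases i <;> simp

lemma vK_val (n : ℕ) : ∀ i, ((vK n : ↥(Kgrp 3 2 2)) : ∀ _ : Fin 3, FreeGroup (Fin 2)) i
    = ![1, bb ^ n * aa ^ n * bb⁻¹ ^ n * aa⁻¹ ^ n, 1] i := by
  intro i
  have h1 : ((vK n : ↥(Kgrp 3 2 2)) : ∀ _ : Fin 3, FreeGroup (Fin 2)) i
      = (((beK : ∀ _ : Fin 3, FreeGroup (Fin 2)) i)⁻¹) ^ n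
        * ((alpK : ∀ _ : Fin 3, FreeGroup (Fin 2)) i) ^ n
        * ((beK : ∀ _ : Fin 3, FreeGroup (Fin 2)) i) ^ n
        * (((alpK : ∀ _ : Fin 3, FreeGroup (Fin 2)) i)⁻¹) ^ n := by
    show ((vK n : ↥(Kgrp 3 2 2)) : ∀ _ : Fin 3, FreeGroup (Fin 2)) i = _
    rw [vK]
    push_cast
    rw [Pi.mul_apply, Pi.mul_apply, Pi.mul_apply, Pi.pow_apply, Pi.pow_apply, Pi.pow_apply,
      Pi.pow_apply, Pi.inv_apply, Pi.inv_apply]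
  rw [h1]
  fin_cases i <;> simp [beK, alpK] <;> group

lemma uK_comm_vK (n : ℕ) : uK ^ n * vK n = vK n * uK ^ n := by
  apply Subtype.ext
  rw [Subgroup.coe_mul, Subgroup.coe_mul]
  funext i
  rw [Pi.mul_apply, Pi.mul_apply, uK_val, vK_val]
  fin_cases i <;> simp <;> group

end Words

section Winding

lemma Kt.t_comm (X Y : Kt) : (X * Y * X⁻¹ * Y⁻¹).t =
    coc (X.g : ∀ _ : Fin 3, FreeGroup (Fin 2)) (Y.g : ∀ _ : Fin 3, FreeGroup (Fin 2))
    - coc (X.g : ∀ _ : Fin 3, FreeGroup (Fin 2))⁻¹ (X.g : ∀ _ : Fin 3, FreeGroup (Fin 2))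
    - coc (Y.g : ∀ _ : Fin 3, FreeGroup (Fin 2))⁻¹ (Y.g : ∀ _ : Fin 3, FreeGroup (Fin 2))
    + coc ((X.g : ∀ _ : Fin 3, FreeGroup (Fin 2)) * (Y.g : ∀ _ : Fin 3, FreeGroup (Fin 2)))
        (X.g : ∀ _ : Fin 3, FreeGroup (Fin 2))⁻¹
    + coc ((X.g : ∀ _ : Fin 3, FreeGroup (Fin 2)) * (Y.g : ∀ _ : Fin 3, FreeGroup (Fin 2))
        * (X.g : ∀ _ : Fin 3, FreeGroup (Fin 2))⁻¹)
        (Y.g : ∀ _ : Fin 3, FreeGroup (Fin 2))⁻¹ := by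
  simp only [Kt.mul_t, Kt.inv_t, Kt.mul_g, Kt.inv_g, Subgroup.coe_mul, InvMemClass.coe_inv]
  ring

lemma eta_u0 (n : ℕ) : eta (((uK ^ n : ↥(Kgrp 3 2 2)) : ∀ _ : Fin 3, FreeGroup (Fin 2)) 0)
    = ⟨(n : ℤ), 0, 0⟩ := by
  rw [uK_val]
  show eta (aa ^ n) = _
  exact eta_a_pow n

lemma eta_u1 (n : ℕ) : eta (((uK ^ n : ↥(Kgrp 3 2 2)) : ∀ _ : Fin 3, FreeGroup (Fin 2)) 1)
    = ⟨0, 0, 0⟩ := by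
  rw [uK_val]
  show eta 1 = _
  rw [map_one]
  rfl

lemma eta_u2 (n : ℕ) : eta (((uK ^ n : ↥(Kgrp 3 2 2)) : ∀ _ : Fin 3, FreeGroup (Fin 2)) 2)
    = ⟨-(n : ℤ), 0, 0⟩ := by
  rw [uK_val]
  show eta (aa⁻¹ ^ n) = _
  exact eta_a_pow' n

lemma eta_v0 (n : ℕ) : eta (((vK n : ↥(Kgrp 3 2 2)) : ∀ _ : Fin 3, FreeGroup (Fin 2)) 0)
    = ⟨0, 0, 0⟩ := by
  rw [vK_val]
  show eta 1 = _
  rw [map_one]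
  rfl

lemma eta_v1 (n : ℕ) : eta (((vK n : ↥(Kgrp 3 2 2)) : ∀ _ : Fin 3, FreeGroup (Fin 2)) 1)
    = ⟨0, 0, -(n : ℤ)^2⟩ := by
  rw [vK_val]
  show eta (bb ^ n * aa ^ n * bb⁻¹ ^ n * aa⁻¹ ^ n) = _
  rw [map_mul, map_mul, map_mul, eta_b_pow, eta_a_pow, eta_b_pow', eta_a_pow']
  ext <;> simp <;> ring

lemma eta_v2 (n : ℕ) : eta (((vK n : ↥(Kgrp 3 2 2)) : ∀ _ : Fin 3, FreeGroup (Fin 2)) 2)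
    = ⟨0, 0, 0⟩ := by
  rw [vK_val]
  show eta 1 = _
  rw [map_one]
  rfl

lemma coc_eval (n : ℕ) :
    letI u := ((uK ^ n : ↥(Kgrp 3 2 2)) : ∀ _ : Fin 3, FreeGroup (Fin 2))
    letI v := ((vK n : ↥(Kgrp 3 2 2)) : ∀ _ : Fin 3, FreeGroup (Fin 2))
    coc u v - coc u⁻¹ u - coc v⁻¹ v + coc (u * v) u⁻¹ + coc (u * v * u⁻¹) v⁻¹
      = 2 * (n : ℤ)^3 := by
  simp only [coc, Ec_mul, Fc_mul, Pc_mul, Ec_inv, Fc_inv, Pc_inv]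
  simp only [Ec, Fc, Pc, eta_u0, eta_u1, eta_u2, eta_v0, eta_v1, eta_v2]
  ring

end Winding

section AreaPlumbing

variable {B : Type}

/-- list version of being a product of conjugates of relators -/
def ListArea {A : Type} (R : Set (FreeGroup A)) (g : FreeGroup A)
    (l : List (FreeGroup A × FreeGroup A)) : Prop :=
  (∀ q ∈ l, q.2 ∈ R ∪ R⁻¹) ∧ g = (l.map fun q => q.1 * q.2 * q.1⁻¹).prod

lemma listArea_areaLE {A : Type} {R : Set (FreeGroup A)} {g : FreeGroup A}
    {l : List (FreeGroup A × FreeGroup A)} (h : ListArea R g l) :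
    AreaLE R g l.length := by
  refine ⟨fun i => (l.get i).1, fun i => (l.get i).2, fun i => h.1 _ (l.get_mem i), ?_⟩
  rw [h.2]
  congr 1
  conv_lhs => rw [← List.ofFn_get l, List.map_ofFn]
  rfl

lemma exists_areaLE {A : Type} (R : Set (FreeGroup A)) {g : FreeGroup A}
    (hg : g ∈ Subgroup.normalClosure R) : ∃ N, AreaLE R g N := by
  suffices h : ∃ l, ListArea R g l by
    obtain ⟨l, hl⟩ := h
    exact ⟨l.length, listArea_areaLE hl⟩
  refine Subgroup.closure_induction ?_ ?_ ?_ ?_ hg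
  · intro x hx
    rw [Group.mem_conjugatesOfSet_iff] at hx
    obtain ⟨r, hr, hconj⟩ := hx
    obtain ⟨c, hc⟩ := isConj_iff.mp hconj
    exact ⟨[(c, r)], fun q hq => by simp at hq; rw [hq]; exact Set.mem_union_left _ hr,
      by simp [← hc]⟩
  · exact ⟨[], by simp [ListArea]⟩
  · rintro x y _ _ ⟨lx, hlx⟩ ⟨ly, hly⟩
    refine ⟨lx ++ ly, fun q hq => ?_, ?_⟩
    · rcases List.mem_append.mp hq with h | h
      exacts [hlx.1 q h, hly.1 q h]
    · rw [List.map_append, List.prod_append, ← hlx.2, ← hly.2]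
  · rintro x _ ⟨lx, hlx⟩
    refine ⟨(lx.map fun q => (q.1, q.2⁻¹)).reverse, fun q hq => ?_, ?_⟩
    · simp only [List.mem_reverse, List.mem_map] at hq
      obtain ⟨p, hp, rfl⟩ := hq
      rcases hlx.1 p hp with h | h
      · exact Set.mem_union_right _ (by simpa using h)
      · exact Set.mem_union_left _ (by simpa using h)
    · rw [hlx.2, List.prod_inv_reverse]
      congr 1
      rw [List.map_reverse, List.map_map, List.map_map]
      congr 1
      refine List.map_congr_left fun q _ => ?_
      simp [mul_inv_rev, mul_assoc]

end AreaPlumbing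

section Lengths

variable {A : Type} [DecidableEq A]

/-- reduced word length -/
noncomputable def len (x : FreeGroup A) : ℕ := x.toWord.length

lemma len_mul (x y : FreeGroup A) : len (x * y) ≤ len x + len y := by
  have h := (FreeGroup.toWord_mul_sublist x y).length_le
  simpa [len] using h

lemma len_inv (x : FreeGroup A) : len x⁻¹ = len x := by
  simp [len, FreeGroup.toWord_inv, FreeGroup.invRev_length]

lemma len_pow (x : FreeGroup A) (n : ℕ) : len (x ^ n) ≤ n * len x := by
  induction n with
  | zero => simp [len, FreeGroup.toWord_one]
  | succ k ih =>
    calc len (x ^ (k+1)) = len (x ^ k * x) := by rw [pow_succ]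
    _ ≤ len (x ^ k) + len x := len_mul _ _
    _ ≤ k * len x + len x := by omega
    _ = (k+1) * len x := by ring

end Lengths

section MainWord

variable {A : Type} (μ : FreeGroup A →* ↥(Kgrp 3 2 2))

/-- the word `x_n = (pa·pap)ⁿ` -/
noncomputable def Xw (pa pap : FreeGroup A) (n : ℕ) : FreeGroup A := (pa * pap) ^ n

/-- the word `y_n = pb⁻ⁿ papⁿ pbⁿ pap⁻ⁿ` -/
noncomputable def Yw (pap pb : FreeGroup A) (n : ℕ) : FreeGroup A :=
  (pb⁻¹) ^ n * pap ^ n * pb ^ n * (pap⁻¹) ^ n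

/-- the null-homotopic word `w_n = [x_n, y_n]` of length `O(n)` and area `≥ 2n³/C` -/
noncomputable def Ww (pa pap pb : FreeGroup A) (n : ℕ) : FreeGroup A :=
  Xw pa pap n * Yw pap pb n * (Xw pa pap n)⁻¹ * (Yw pap pb n)⁻¹

variable {pa pap pb : FreeGroup A}

lemma mu_X (hpa : μ pa = alK) (hpap : μ pap = alpK) (n : ℕ) :
    μ (Xw pa pap n) = uK ^ n := by
  rw [Xw, map_pow, map_mul, hpa, hpap]; rfl

lemma mu_Y (hpap : μ pap = alpK) (hpb : μ pb = beK) (n : ℕ) :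
    μ (Yw pap pb n) = vK n := by
  rw [Yw, map_mul, map_mul, map_mul, map_pow, map_pow, map_pow, map_pow, map_inv, map_inv,
    hpb, hpap]
  rfl

lemma mu_W (hpa : μ pa = alK) (hpap : μ pap = alpK) (hpb : μ pb = beK) (n : ℕ) :
    μ (Ww pa pap pb n) = 1 := by
  rw [Ww, map_mul, map_mul, map_mul, map_inv, map_inv, mu_X μ hpa hpap, mu_Y μ hpap hpb]
  rw [uK_comm_vK]
  group

lemma Tw_W (hpa : μ pa = alK) (hpap : μ pap = alpK) (hpb : μ pb = beK) (n : ℕ) :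
    Tw μ (Ww pa pap pb n) = 2 * (n : ℤ)^3 := by
  show (PhiT μ _).t = _
  rw [Ww, map_mul, map_mul, map_mul, map_inv, map_inv]
  rw [Kt.t_comm]
  have h1 : (PhiT μ (Xw pa pap n)).g = uK ^ n := by
    rw [gPart_PhiT, mu_X μ hpa hpap]
  have h2 : (PhiT μ (Yw pap pb n)).g = vK n := by
    rw [gPart_PhiT, mu_Y μ hpap hpb]
  rw [h1, h2]
  exact coc_eval n

lemma len_W [DecidableEq A] (pa pap pb : FreeGroup A) (n : ℕ) :
    len (Ww pa pap pb n) ≤ n * (2 * len pa + 6 * len pap + 4 * len pb) := by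
  have hX : len (Xw pa pap n) ≤ n * (len pa + len pap) :=
    le_trans (len_pow _ n) (Nat.mul_le_mul_left n (len_mul pa pap))
  have hY : len (Yw pap pb n) ≤ n * len pb + n * len pap + n * len pb + n * len pap := by
    have h1 : len ((pb⁻¹) ^ n) ≤ n * len pb := by
      have := len_pow (pb⁻¹ : FreeGroup A) n
      rwa [len_inv] at this
    have h2 : len ((pap⁻¹) ^ n) ≤ n * len pap := by
      have := len_pow (pap⁻¹ : FreeGroup A) n
      rwa [len_inv] at this
    calc len (Yw pap pb n)
        ≤ len ((pb⁻¹) ^ n * pap ^ n * pb ^ n) + len ((pap⁻¹) ^ n) := len_mul _ _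
      _ ≤ len ((pb⁻¹) ^ n * pap ^ n) + len (pb ^ n) + len ((pap⁻¹) ^ n) := by
          have := len_mul ((pb⁻¹) ^ n * pap ^ n) (pb ^ n); omega
      _ ≤ len ((pb⁻¹) ^ n) + len (pap ^ n) + len (pb ^ n) + len ((pap⁻¹) ^ n) := by
          have := len_mul ((pb⁻¹) ^ n) (pap ^ n); omega
      _ ≤ n * len pb + n * len pap + n * len pb + n * len pap := by
          have := len_pow pap n; have := len_pow pb n; omega
  have hW : len (Ww pa pap pb n)
      ≤ len (Xw pa pap n) + len (Yw pap pb n) + len (Xw pa pap n) + len (Yw pap pb n) := by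
    calc len (Ww pa pap pb n)
        ≤ len (Xw pa pap n * Yw pap pb n * (Xw pa pap n)⁻¹) + len ((Yw pap pb n)⁻¹) :=
          len_mul _ _
      _ ≤ len (Xw pa pap n * Yw pap pb n) + len ((Xw pa pap n)⁻¹) + len ((Yw pap pb n)⁻¹) := by
          have := len_mul (Xw pa pap n * Yw pap pb n) ((Xw pa pap n)⁻¹); omega
      _ ≤ len (Xw pa pap n) + len (Yw pap pb n) + len ((Xw pa pap n)⁻¹)
            + len ((Yw pap pb n)⁻¹) := by
          have := len_mul (Xw pa pap n) (Yw pap pb n); omega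
      _ = len (Xw pa pap n) + len (Yw pap pb n) + len (Xw pa pap n) + len (Yw pap pb n) := by
          rw [len_inv, len_inv]
  have hr : n * (2 * len pa + 6 * len pap + 4 * len pb)
      = 2 * (n * (len pa + len pap))
        + 2 * (n * len pb + n * len pap + n * len pb + n * len pap) := by ring
  omega

end MainWord

/-- Let `K = K^3_2(2)` be the kernel of `θ : F_2 × F_2 × F_2 → ℤ²`, `θ(e^(i)_j) = t_j`.
For every finite presentation `P = ⟨A | R⟩` of `K` the Dehn function `δ_P` satisfies
`n³ ⪯ δ_P`: there is a constant `C > 0` with `n³ ≤ C·δ_P(Cn + C) + Cn + C` for all `n`. -/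
theorem dehn_function_cubic_lower_bound
    (A : Type) [Finite A] (μ : FreeGroup A →* (Kgrp 3 2 2))
    (hμ : Function.Surjective μ) (R : Set (FreeGroup A)) (hR : R.Finite)
    (hker : μ.ker = Subgroup.normalClosure R) :
    ∃ C : ℕ, 0 < C ∧ ∀ n : ℕ,
      n ^ 3 ≤ C * dehn μ R (C * n + C) + C * n + C := by
  classical
  obtain ⟨pa, hpa⟩ := hμ alK
  obtain ⟨pap, hpap⟩ := hμ alpK
  obtain ⟨pb, hpb⟩ := hμ beK
  have hkerR : ∀ r ∈ R ∪ R⁻¹, μ r = 1 := by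
    intro r hr
    have hsub : ∀ s ∈ R, μ s = 1 := fun s hs =>
      MonoidHom.mem_ker.mp (hker ▸ Subgroup.subset_normalClosure hs)
    rcases hr with h | h
    · exact hsub r h
    · have h1 : r⁻¹ ∈ R := Set.mem_inv.mp h
      have h2 := hsub _ h1
      calc μ r = (μ r⁻¹)⁻¹ := by rw [map_inv, inv_inv]
      _ = 1 := by rw [h2, inv_one]
  have hRfin : (R ∪ R⁻¹).Finite := hR.union hR.inv
  set B : ℕ := hRfin.toFinset.sup (fun r => (Tw μ r).natAbs) with hBdef
  have hBle : ∀ r ∈ R ∪ R⁻¹, (Tw μ r).natAbs ≤ B := by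
    intro r hr
    rw [hBdef]
    exact Finset.le_sup (f := fun r => (Tw μ r).natAbs) (hRfin.mem_toFinset.mpr hr)
  set L0 : ℕ := 2 * len pa + 6 * len pap + 4 * len pb with hL0def
  set C : ℕ := B + L0 + 1 with hCdef
  refine ⟨C, by omega, fun n => ?_⟩
  set Wn : FreeGroup A := Ww pa pap pb n with hWndef
  have hmuW : μ Wn = 1 := mu_W μ hpa hpap hpb n
  have hTw : Tw μ Wn = 2 * (n : ℤ)^3 := Tw_W μ hpa hpap hpb n
  have hlen : len Wn ≤ n * L0 := len_W pa pap pb n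
  -- every expression of Wn as a product of m conjugates of relators has m*B ≥ 2n³
  have harea : ∀ m : ℕ, AreaLE R Wn m → 2 * n^3 ≤ m * B := by
    intro m hm
    obtain ⟨x, r, hr, hprod⟩ := hm
    have h1 : Tw μ Wn = ∑ i, Tw μ (r i) := by
      rw [hprod]
      exact Tw_prod_conj μ x r (fun i => hkerR _ (hr i))
    have h2 : (2 * (n : ℤ)^3) ≤ (m : ℤ) * (B : ℤ) := by
      calc (2 * (n : ℤ)^3) = |Tw μ Wn| := by
            rw [hTw]; rw [abs_of_nonneg (by positivity)]
      _ = |∑ i, Tw μ (r i)| := by rw [h1]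
      _ ≤ ∑ i, |Tw μ (r i)| := Finset.abs_sum_le_sum_abs _ _
      _ ≤ ∑ _i : Fin m, (B : ℤ) := Finset.sum_le_sum (fun i _ => by
            have h3 := hBle _ (hr i)
            rw [Int.abs_eq_natAbs]
            exact_mod_cast h3)
      _ = (m : ℤ) * (B : ℤ) := by
            rw [Finset.sum_const, Finset.card_univ, Fintype.card_fin]
            push_cast
            ring
    exact_mod_cast h2
  have hWcl : Wn ∈ Subgroup.normalClosure R := by
    rw [← hker]
    exact MonoidHom.mem_ker.mpr hmuW
  have hne : {N | AreaLE R Wn N}.Nonempty := exists_areaLE R hWcl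
  have hmem : area R Wn ∈ {N | AreaLE R Wn N} := Nat.sInf_mem hne
  have hA : 2 * n^3 ≤ (area R Wn) * B := harea _ hmem
  have hdehn : area R Wn ≤ dehn μ R (C * n + C) := by
    apply le_csSup
    · apply Set.Finite.bddAbove
      apply Set.Finite.subset
        (Set.Finite.image (fun w => area R (FreeGroup.mk w))
          (List.finite_length_le (A × Bool) (C * n + C)))
      rintro a ⟨w, hw1, _, rfl⟩
      exact ⟨w, hw1, rfl⟩
    · refine ⟨Wn.toWord, ?_, ?_, ?_⟩
      · have h4 : L0 ≤ C := by omega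
        calc Wn.toWord.length = len Wn := rfl
        _ ≤ n * L0 := hlen
        _ ≤ n * C := Nat.mul_le_mul_left n h4
        _ = C * n := Nat.mul_comm n C
        _ ≤ C * n + C := Nat.le_add_right _ _
      · rw [FreeGroup.mk_toWord]; exact hmuW
      · rw [FreeGroup.mk_toWord]
  have hBC : B ≤ C := by omega
  have h5 : n^3 ≤ 2 * n^3 := by omega
  calc n^3 ≤ 2 * n^3 := h5
  _ ≤ area R Wn * B := hA
  _ ≤ dehn μ R (C * n + C) * C := Nat.mul_le_mul hdehn hBC
  _ = C * dehn μ R (C * n + C) := Nat.mul_comm _ _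
  _ ≤ C * dehn μ R (C * n + C) + C * n + C := by omega
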